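/- arXiv:1502.02624 — 2 statements merged into one kernel-verified Lean document; each statement's English description precedes it below -/
import Mathlib

section
/- There exists N such that for all n ≥ N and every odd integer d with 3·2^{n−1} − 1 < d < 2^{n+1} − 7, the 2-density of the set D := {i : 1 ≤ i ≤ d, i odd} \ {2^n − 1, 3·2^{n−1} − 1} equals 1/(n−1); that is, every solution U of any length ℓ for D satisfies (n−1)·s(U) ≥ ℓ, and some solution attains (n−1)·s(U) = ℓ. -/
/-- The binary weight `s₂(m)`: the sum of the base-2 digits of `m`. -/
def s2 (m : ℕ) : ℕ := (Nat.digits 2 m).sum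

/-- The shift map on `{0, …, 2^ℓ - 1}`: it fixes `2^ℓ - 1` and sends any other `i`
to the remainder of `2·i` modulo `2^ℓ - 1`. -/
def shift2 (ℓ i : ℕ) : ℕ := if i = 2 ^ ℓ - 1 then i else (2 * i) % (2 ^ ℓ - 1)

/-- `U : ℕ → ℕ` (supported on `D`) is a solution of length `ℓ` for `D`:
`0 ≤ u_d ≤ 2^ℓ - 1` and `∑ d·u_d` is a positive multiple of `2^ℓ - 1`. -/
structure IsSolution (D : Finset ℕ) (ℓ : ℕ) (U : ℕ → ℕ) : Prop where
  len_pos : 1 ≤ ℓ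
  bounded : ∀ d, U d ≤ 2 ^ ℓ - 1
  supp_sub : ∀ d, d ∉ D → U d = 0
  dvd : (2 ^ ℓ - 1) ∣ ∑ d ∈ D, d * U d
  pos : 0 < ∑ d ∈ D, d * U d

/-- The weight `s(U) = ∑_{d ∈ D} s₂(u_d)` of a solution. -/
def weight (D : Finset ℕ) (U : ℕ → ℕ) : ℕ := ∑ d ∈ D, s2 (U d)

/-- The support map `φ_U(k) = (∑_{d ∈ D} d·δ^k(u_d)) / (2^ℓ - 1)` of a solution,
viewed as an `ℓ`-periodic function on `ℕ`. -/
def supportMap (D : Finset ℕ) (ℓ : ℕ) (U : ℕ → ℕ) (k : ℕ) : ℕ :=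
  (∑ d ∈ D, d * (shift2 ℓ)^[k] (U d)) / (2 ^ ℓ - 1)

/-- A solution is irreducible when its support map is injective on `ℤ/ℓℤ`,
i.e. injective on `{0, …, ℓ-1}`. -/
def IrreducibleSol (D : Finset ℕ) (ℓ : ℕ) (U : ℕ → ℕ) : Prop :=
  Set.InjOn (supportMap D ℓ U) ↑(Finset.range ℓ)

/-- `U` is a shift of `V` (coordinatewise iterate of the shift map). -/
def IsShiftOf (ℓ : ℕ) (U V : ℕ → ℕ) : Prop :=
  ∃ k, ∀ d, U d = (shift2 ℓ)^[k] (V d)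

/-- The set of odd integers `1 ≤ i ≤ d`. -/
def oddUpTo (d : ℕ) : Finset ℕ := (Finset.range (d + 1)).filter (fun i => i % 2 = 1)

/-- `D = {i : 1 ≤ i ≤ 2^{n+1} - 3, i odd}`. -/
def oddD (n : ℕ) : Finset ℕ := oddUpTo (2 ^ (n + 1) - 3)

/-- The solution with `u_a = 1` and all other coordinates `0`. -/
def sol1 (a : ℕ) : ℕ → ℕ := fun d => if d = a then 1 else 0

/-- The solution with `u_a = x`, `u_b = y` and all other coordinates `0`. -/
def sol2 (a x b y : ℕ) : ℕ → ℕ := fun d => if d = a then x else if d = b then y else 0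

/-- The solution with `u_a = x`, `u_b = y`, `u_c = z` and all other coordinates `0`. -/
def sol3 (a x b y c z : ℕ) : ℕ → ℕ :=
  fun d => if d = a then x else if d = b then y else if d = c then z else 0




-- basic s2 facts
lemma s2_zero : s2 0 = 0 := by simp [s2]
lemma s2_rec (u : ℕ) (hu : 0 < u) : s2 u = u % 2 + s2 (u / 2) := by
  unfold s2
  rw [Nat.digits_def' (by norm_num : 1 < 2) hu]
  simp

lemma s2_one : s2 1 = 1 := by simp [s2]

lemma s2_eq_bits : ∀ L u : ℕ, u < 2 ^ L →
    (∑ j ∈ Finset.range L, if u / 2 ^ j % 2 = 1 then 1 else 0) = s2 u := by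
  intro L
  induction L with
  | zero => intro u hu; interval_cases u; simp [s2_zero]
  | succ L ih =>
    intro u hu
    rcases Nat.eq_zero_or_pos u with rfl | hpos
    · simp [s2_zero]
    rw [Finset.sum_range_succ']
    have h1 : ∀ j, u / 2 ^ (j + 1) = (u / 2) / 2 ^ j := by
      intro j
      rw [pow_succ', Nat.div_div_eq_div_mul]
    have h2 : (∑ j ∈ Finset.range L, if u / 2 ^ (j+1) % 2 = 1 then 1 else 0)
        = s2 (u / 2) := by
      have := ih (u / 2) (by
        have : u < 2 ^ L * 2 := by rw [← pow_succ]; exact hu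
        omega)
      rw [← this]
      refine Finset.sum_congr rfl ?_
      intro j _
      rw [h1 j]
    rw [h2, s2_rec u hpos]
    simp only [pow_zero, Nat.div_one]
    rcases Nat.mod_two_eq_zero_or_one u with h | h <;> simp [h, Nat.add_comm]


-- s2 of 2^L - 1
lemma pow_sub_one_div (L j : ℕ) (h : j ≤ L) : (2 ^ L - 1) / 2 ^ j = 2 ^ (L - j) - 1 := by
  have hAB : 2 ^ j * 2 ^ (L - j) = 2 ^ L := by rw [← pow_add]; congr 1; omega
  set A := 2 ^ j with hA
  set B := 2 ^ (L - j) with hB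
  have hA1 : (1:ℕ) ≤ A := Nat.one_le_two_pow
  have hB1 : (1:ℕ) ≤ B := Nat.one_le_two_pow
  rw [← hAB]
  have h1 : (B - 1) * A = B * A - A := by rw [tsub_mul, one_mul]
  have h2 : B * A = A * B := mul_comm _ _
  have hab1 : (1:ℕ) ≤ A * B := le_trans hA1 (Nat.le_mul_of_pos_right A (by omega))
  have e1 : (B - 1) * A ≤ A * B - 1 := by
    calc (B - 1) * A = B * A - A := h1
    _ = A * B - A := by rw [h2]
    _ ≤ A * B - 1 := Nat.sub_le_sub_left hA1 _
  have e2 : A * B - 1 < (B - 1 + 1) * A := by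
    have h3 : B - 1 + 1 = B := by omega
    rw [h3]
    omega
  exact Nat.div_eq_of_lt_le e1 e2

-- tau and Mf
def tau (w : ℕ) : ℕ := if w % 2 = 1 then (if w = 1 then 4 else if w ≤ 7 then 8 else 16) else 4

def Mf (n w : ℕ) : ℕ := max (2 ^ n * tau w) (16 * w)

lemma tau_ge4 (w : ℕ) : 4 ≤ tau w := by
  unfold tau; split_ifs <;> norm_num

lemma tau_le16 (w : ℕ) : tau w ≤ 16 := by
  unfold tau; split_ifs <;> norm_num

lemma tau_ge8 (w : ℕ) (h1 : w % 2 = 1) (h2 : w ≠ 1) : 8 ≤ tau w := by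
  unfold tau
  rw [if_pos h1, if_neg h2]
  split <;> norm_num

lemma tau_eq16 (w : ℕ) (h1 : w % 2 = 1) (h2 : 9 ≤ w) : tau w = 16 := by
  unfold tau
  rw [if_pos h1, if_neg (by omega), if_neg (by omega)]

lemma Mf_ge_base (n w : ℕ) : 2 ^ n * tau w ≤ Mf n w := le_max_left _ _
lemma Mf_ge_lin (n w : ℕ) : 16 * w ≤ Mf n w := le_max_right _ _

lemma Mf_ge8p (n w : ℕ) : 2 ^ n * 4 ≤ Mf n w :=
  le_trans (Nat.mul_le_mul_left _ (tau_ge4 w)) (Mf_ge_base n w)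

lemma Mf_pos (n w : ℕ) : 1 ≤ Mf n w := by
  have := Mf_ge8p n w
  have : (1:ℕ) ≤ 2 ^ n := Nat.one_le_two_pow
  calc 1 ≤ 2 ^ n * 4 := by omega
  _ ≤ Mf n w := Mf_ge8p n w

lemma Mf_two_mul (n w : ℕ) : Mf n (2 * w) ≤ 2 * Mf n w := by
  unfold Mf
  have h1 : 2 ^ n * tau (2 * w) = 2 ^ n * 4 := by
    congr 1
    unfold tau
    rw [if_neg (by omega)]
  rw [h1]
  have h2 : 2 ^ n * 4 ≤ 2 * (2 ^ n * tau w) := by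
    have h4 := Nat.mul_le_mul_left (2 ^ n) (tau_ge4 w)
    omega
  have h3 : 16 * (2 * w) ≤ 2 * (16 * w) := by ring_nf; omega
  rcases max_cases (2 ^ n * tau w) (16 * w) with ⟨he, _⟩ | ⟨he, _⟩ <;> rw [he] <;>
    simp only [max_le_iff] <;> constructor <;> omega

-- Nf
def Nf (n : ℕ) (x : ℕ) : ℕ :=
  if h : x ≠ 0 ∧ x % 2 = 0 then 2 * Nf n (x / 2) else Mf n x
decreasing_by omega

lemma Nf_odd (n x : ℕ) (h : x % 2 = 1) : Nf n x = Mf n x := by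
  rw [Nf]; rw [dif_neg (by omega)]

lemma Nf_even (n x : ℕ) (h : x ≠ 0) (h2 : x % 2 = 0) : Nf n x = 2 * Nf n (x / 2) := by
  rw [Nf]; rw [dif_pos ⟨h, h2⟩]

lemma Nf_two_mul (n x : ℕ) (h : x ≠ 0) : Nf n (2 * x) = 2 * Nf n x := by
  rw [Nf_even n (2 * x) (by omega) (by omega)]
  congr 1
  congr 1
  omega

lemma Nf_ge_Mf (n : ℕ) : ∀ x, Mf n x ≤ Nf n x := by
  intro x
  induction x using Nat.strong_induction_on with
  | _ x ih =>
    rcases Nat.eq_zero_or_pos x with rfl | hx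
    · rw [Nf]; simp
    rcases Nat.mod_two_eq_zero_or_one x with h | h
    · rw [Nf_even n x (by omega) h]
      have hx2 : x / 2 < x := by omega
      have := ih (x / 2) hx2
      have he : x = 2 * (x / 2) := by omega
      calc Mf n x = Mf n (2 * (x / 2)) := by rw [← he]
      _ ≤ 2 * Mf n (x / 2) := Mf_two_mul n _
      _ ≤ 2 * Nf n (x / 2) := by omega
    · rw [Nf_odd n x h]

lemma Nf_pos (n x : ℕ) : 1 ≤ Nf n x := le_trans (Mf_pos n x) (Nf_ge_Mf n x)




def Dok (n i : ℕ) : Prop :=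
  i % 2 = 1 ∧ i + 9 ≤ 2 ^ (n + 1) ∧ i + 1 ≠ 2 ^ n ∧ i + 1 ≠ 3 * 2 ^ (n - 1)

lemma key (n d z y G : ℕ) (hn : 12 ≤ n) (hd : Dok n d) (hz : 1 ≤ z)
    (hzo : G = 0 ∨ z % 2 = 1) (hy : 1 ≤ y) (heq : y + d = 2 ^ G * z) :
    2 ^ G * Mf n z ≤ 2 ^ (n - 1) * Mf n y := by
  obtain ⟨hd1, hd2, hd3, hd4⟩ := hd
  set p := 2 ^ (n - 1) with hpdef
  have hp : 2048 ≤ p := by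
    calc (2048:ℕ) = 2 ^ 11 := by norm_num
    _ ≤ 2 ^ (n - 1) := Nat.pow_le_pow_right (by norm_num) (by omega)
  have h2n : 2 ^ n = 2 * p := by
    rw [hpdef, ← pow_succ']
    congr 1
    omega
  have h4p : (2:ℕ) ^ (n + 1) = 4 * p := by
    rw [hpdef, show n + 1 = (n-1) + 2 by omega, pow_add]
    ring
  have hd2' : d + 9 ≤ 4 * p := by rw [← h4p]; exact hd2
  have hd1' : 1 ≤ d := by omega
  have hpp : 2048 * p ≤ p * p := Nat.mul_le_mul_right p hp
  -- Part (i)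
  have Hi : 2 ^ G * (16 * z) ≤ p * Mf n y := by
    have hb : 2 ^ G * (16 * z) = 16 * (y + d) := by rw [heq]; ring
    rw [hb]
    rcases le_or_gt 4 y with h4 | h4
    · obtain ⟨t, rfl⟩ := Nat.exists_eq_add_of_le h4
      have h5 : p * (16 * (4 + t)) ≤ p * Mf n (4 + t) :=
        Nat.mul_le_mul_left p (Mf_ge_lin n (4 + t))
      have hqe : p * (16 * (4 + t)) = 64 * p + 16 * (p * t) := by ring
      have hpt : t ≤ p * t := Nat.le_mul_of_pos_left t (by omega)
      refine le_trans ?_ h5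
      rw [hqe]
      omega
    · have h9 : p * (2 ^ n * 4) ≤ p * Mf n y := Nat.mul_le_mul_left p (Mf_ge8p n y)
      refine le_trans ?_ h9
      have hEq : p * (2 ^ n * 4) = 8 * (p * p) := by rw [h2n]; ring
      rw [hEq]
      omega
  -- Part (ii)
  have Hii : 2 ^ G * (2 ^ n * tau z) ≤ p * Mf n y := by
    rcases Nat.eq_zero_or_pos G with rfl | hG
    · -- G = 0
      rw [pow_zero, one_mul]
      have h16 := tau_le16 z
      have h8 := Mf_ge8p n y
      have h1 : 2 ^ n * tau z ≤ 32 * p := by rw [h2n]; nlinarith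
      have h2 : p * (2 ^ n * 4) = 8 * (p * p) := by rw [h2n]; ring
      have h3 : p * (2 ^ n * 4) ≤ p * Mf n y := Nat.mul_le_mul_left p h8
      refine le_trans h1 (le_trans ?_ h3)
      rw [h2]
      omega
    · have hzodd : z % 2 = 1 := hzo.resolve_left (by omega)
      have hGeven : 2 ^ G % 2 = 0 := by
        rw [show G = (G - 1) + 1 by omega, pow_succ]
        omega
      have hyodd : y % 2 = 1 := by
        obtain ⟨c, hc⟩ := (dvd_pow_self 2 (by omega : G ≠ 0)).mul_right z
        have hmod : 2 ^ G * z % 2 = 0 := by rw [hc]; exact Nat.mul_mod_right 2 c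
        omega
      rcases eq_or_ne z 1 with rfl | hz1
      · -- z = 1
        have htau : tau 1 = 4 := by norm_num [tau]
        rw [htau]
        rw [mul_one] at heq
        rcases lt_or_ge G n with hGn | hGn
        · -- G ≤ n - 1
          have hGp : 2 ^ G ≤ p := by
            rw [hpdef]; exact Nat.pow_le_pow_right (by norm_num) (by omega)
          calc 2 ^ G * (2 ^ n * 4) ≤ p * (2 ^ n * 4) := Nat.mul_le_mul_right _ hGp
          _ ≤ p * Mf n y := Nat.mul_le_mul_left p (Mf_ge8p n y)
        · rcases eq_or_lt_of_le hGn with hGn' | hGn'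
          · -- G = n
            have he : y + d = 2 * p := by rw [heq, ← hGn', h2n]
            have hy1 : y ≠ 1 := by
              intro h
              apply hd3
              rw [h2n]
              omega
            have ht8 := tau_ge8 y hyodd hy1
            have hMy : 2 ^ n * 8 ≤ Mf n y :=
              le_trans (Nat.mul_le_mul_left _ ht8) (Mf_ge_base n y)
            calc 2 ^ G * (2 ^ n * 4) = p * (2 ^ n * 8) := by
                  rw [← hGn', h2n]; ring
            _ ≤ p * Mf n y := Nat.mul_le_mul_left p hMy
          · rcases eq_or_lt_of_le (show n + 1 ≤ G from hGn') with hGn2 | hGn2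
            · -- G = n + 1
              have he : y + d = 4 * p := by rw [heq, ← hGn2, h4p]
              have hy9 : 9 ≤ y := by omega
              have htY := tau_eq16 y hyodd hy9
              have hMy : 2 ^ n * 16 ≤ Mf n y := by
                rw [← htY]; exact Mf_ge_base n y
              calc 2 ^ G * (2 ^ n * 4) = p * (2 ^ n * 16) := by
                    rw [← hGn2, h4p, h2n]; ring
              _ ≤ p * Mf n y := Nat.mul_le_mul_left p hMy
            · -- G ≥ n + 2
              obtain ⟨t, ht⟩ := Nat.exists_eq_add_of_le (show n + 2 ≤ G by omega)
              set Q := 2 ^ t with hQdef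
              have hQ1 : 1 ≤ Q := Nat.one_le_two_pow
              have hGQ : 2 ^ G = 8 * (p * Q) := by
                rw [ht, pow_add, hpdef, hQdef, show n + 2 = (n-1) + 3 by omega, pow_add]
                ring
              have heq2 : y + d = 8 * (p * Q) := by rw [heq, hGQ]
              have hpq : p ≤ p * Q := Nat.le_mul_of_pos_right p (by omega)
              have hyb : 4 * (p * Q) ≤ y := by omega
              have hL : 2 ^ G * (2 ^ n * 4) = p * (16 * (4 * (p * Q))) := by
                rw [hGQ, h2n]; ring
              rw [hL]
              have h1 : (16 : ℕ) * (4 * (p * Q)) ≤ 16 * y := Nat.mul_le_mul_left 16 hyb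
              exact Nat.mul_le_mul_left p (le_trans h1 (Mf_ge_lin n y))
      · rcases le_or_gt z 7 with hz7 | hz9
        · -- z ∈ {3,5,7}
          have htau : tau z = 8 := by
            unfold tau; rw [if_pos hzodd, if_neg hz1, if_pos hz7]
          rw [htau]
          have hz3 : 3 ≤ z := by omega
          rcases lt_or_ge G (n - 1) with hG1 | hG1
          · -- G ≤ n - 2
            have hGp : 2 ^ (G + 1) ≤ p := by
              rw [hpdef]; exact Nat.pow_le_pow_right (by norm_num) (by omega)
            have hL : 2 ^ G * (2 ^ n * 8) = 2 ^ (G + 1) * (8 * p) := by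
              rw [h2n, pow_succ]; ring
            have hR : p * (2 ^ n * 4) = p * (8 * p) := by rw [h2n]; ring
            calc 2 ^ G * (2 ^ n * 8) = 2 ^ (G + 1) * (8 * p) := hL
            _ ≤ p * (8 * p) := Nat.mul_le_mul_right _ hGp
            _ = p * (2 ^ n * 4) := hR.symm
            _ ≤ p * Mf n y := Nat.mul_le_mul_left p (Mf_ge8p n y)
          · rcases eq_or_lt_of_le hG1 with hG2 | hG2
            · -- G = n - 1
              have hEp : 2 ^ G = p := by rw [hpdef, hG2]
              have he : y + d = p * z := by rw [heq, hEp]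
              have hzc : z = 3 ∨ z = 5 ∨ z = 7 := by omega
              have hy3 : 3 ≤ y := by
                rcases hzc with rfl | rfl | rfl
                · -- z = 3 : y = 1 would give d + 1 = 3p
                  have : y ≠ 1 := by
                    intro h; apply hd4; omega
                  omega
                · have hee : y + d = 5 * p := by rw [he]; ring
                  omega
                · have hee : y + d = 7 * p := by rw [he]; ring
                  omega
              have hy1 : y ≠ 1 := by omega
              have ht8 := tau_ge8 y hyodd hy1
              have hMy : 2 ^ n * 8 ≤ Mf n y :=
                le_trans (Nat.mul_le_mul_left _ ht8) (Mf_ge_base n y)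
              calc 2 ^ G * (2 ^ n * 8) = p * (2 ^ n * 8) := by rw [hEp]
              _ ≤ p * Mf n y := Nat.mul_le_mul_left p hMy
            · rcases eq_or_lt_of_le (show n ≤ G by omega) with hG3 | hG3
              · -- G = n
                have hE2p : 2 ^ G = 2 * p := by rw [← hG3, h2n]
                have heq2 : y + d = 2 * p * z := by rw [heq, hE2p]
                have h6p : 2 * p * 3 ≤ 2 * p * z := Nat.mul_le_mul_left _ hz3
                have hy9 : 9 ≤ y := by omega
                have htY := tau_eq16 y hyodd hy9
                have hMy : 2 ^ n * 16 ≤ Mf n y := by rw [← htY]; exact Mf_ge_base n y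
                calc 2 ^ G * (2 ^ n * 8) = p * (2 ^ n * 16) := by rw [hE2p, h2n]; ring
                _ ≤ p * Mf n y := Nat.mul_le_mul_left p hMy
              · -- G ≥ n + 1
                set E := 2 ^ G with hEdef
                have hE4p : 4 * p ≤ E := by
                  rw [hEdef, ← h4p]
                  exact Nat.pow_le_pow_right (by norm_num) (by omega)
                have hEz : E * 3 ≤ E * z := Nat.mul_le_mul_left _ hz3
                have hy2E : 2 * E ≤ y := by omega
                have h1 : (16:ℕ) * (2 * E) ≤ 16 * y := Nat.mul_le_mul_left _ hy2E
                calc E * (2 ^ n * 8) = 16 * (p * E) := by rw [h2n]; ring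
                _ ≤ 32 * (p * E) := by omega
                _ = p * (16 * (2 * E)) := by ring
                _ ≤ p * (16 * y) := Nat.mul_le_mul_left p h1
                _ ≤ p * Mf n y := Nat.mul_le_mul_left p (Mf_ge_lin n y)
        · -- z ≥ 9 odd
          have htau : tau z = 16 := tau_eq16 z hzodd (by omega)
          rw [htau]
          have hz9' : 9 ≤ z := by omega
          rcases lt_or_ge G (n - 2) with hG1 | hG1
          · -- G ≤ n - 3
            have hGp : 2 ^ (G + 2) ≤ p := by
              rw [hpdef]; exact Nat.pow_le_pow_right (by norm_num) (by omega)
            have hL : 2 ^ G * (2 ^ n * 16) = 2 ^ (G + 2) * (8 * p) := by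
              rw [h2n, pow_add]; ring
            calc 2 ^ G * (2 ^ n * 16) = 2 ^ (G + 2) * (8 * p) := hL
            _ ≤ p * (8 * p) := Nat.mul_le_mul_right _ hGp
            _ = p * (2 ^ n * 4) := by rw [h2n]; ring
            _ ≤ p * Mf n y := Nat.mul_le_mul_left p (Mf_ge8p n y)
          · rcases lt_or_ge G n with hG2 | hG2
            · -- G = n-2 or n-1
              set r := 2 ^ (n - 2) with hrdef
              have hpr : p = 2 * r := by
                rw [hpdef, hrdef, ← pow_succ']
                congr 1
                omega
              have hrG : r ≤ 2 ^ G := by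
                rw [hrdef]; exact Nat.pow_le_pow_right (by norm_num) (by omega)
              have hGp : 2 ^ G ≤ p := by
                rw [hpdef]; exact Nat.pow_le_pow_right (by norm_num) (by omega)
              have hX : r * 9 ≤ 2 ^ G * z := Nat.mul_le_mul hrG hz9'
              have hy9 : 9 ≤ y := by omega
              have htY := tau_eq16 y hyodd hy9
              have hMy : 2 ^ n * 16 ≤ Mf n y := by rw [← htY]; exact Mf_ge_base n y
              calc 2 ^ G * (2 ^ n * 16) ≤ p * (2 ^ n * 16) := Nat.mul_le_mul_right _ hGp
              _ ≤ p * Mf n y := Nat.mul_le_mul_left p hMy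
            · -- G ≥ n
              set E := 2 ^ G with hEdef
              have hE2p : 2 * p ≤ E := by
                rw [hEdef, ← h2n]
                exact Nat.pow_le_pow_right (by norm_num) hG2
              have hEz : E * 9 ≤ E * z := Nat.mul_le_mul_left _ hz9'
              have hy7E : 7 * E ≤ y := by omega
              have h1 : (16:ℕ) * (7 * E) ≤ 16 * y := Nat.mul_le_mul_left _ hy7E
              calc E * (2 ^ n * 16) = 32 * (p * E) := by rw [h2n]; ring
              _ ≤ 112 * (p * E) := by omega
              _ = p * (16 * (7 * E)) := by ring
              _ ≤ p * (16 * y) := Nat.mul_le_mul_left p h1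
              _ ≤ p * Mf n y := Nat.mul_le_mul_left p (Mf_ge_lin n y)
  -- combine
  have hMfz : Mf n z = max (2 ^ n * tau z) (16 * z) := rfl
  rw [hMfz]
  rcases max_choice (2 ^ n * tau z) (16 * z) with h | h <;> rw [h]
  · exact Hii
  · exact Hi

lemma chain (n : ℕ) (hn : 12 ≤ n) (F : Finset ℕ) :
    ∀ (_ : F.Nonempty) (_ : ∀ i ∈ F, Dok n i) (z G y : ℕ), 1 ≤ z → (G = 0 ∨ z % 2 = 1) →
    1 ≤ y → y + ∑ i ∈ F, i = 2 ^ G * z →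
    2 ^ G * Mf n z ≤ Mf n y * 2 ^ ((n - 1) * F.card) := by
  induction F using Finset.induction_on with
  | empty => intro h; exact absurd rfl (Finset.nonempty_iff_ne_empty.mp h)
  | @insert a F ha ih =>
    intro _ hok z G y hz hzo hy heq
    rw [Finset.sum_insert ha] at heq
    rcases F.eq_empty_or_nonempty with rfl | hFne
    · simp only [Finset.sum_empty, add_zero] at heq
      rw [Finset.card_insert_of_notMem ha, Finset.card_empty]
      have hkey := key n a z y G hn (hok a (Finset.mem_insert_self a _)) hz hzo hy (by omega)
      calc 2 ^ G * Mf n z ≤ 2 ^ (n - 1) * Mf n y := hkey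
      _ = Mf n y * 2 ^ ((n - 1) * (0 + 1)) := by rw [mul_comm]; congr 1; congr 1; omega
    · have hok' : ∀ i ∈ F, Dok n i := fun i hi => hok i (Finset.mem_insert_of_mem hi)
      have hih := ih hFne hok' z G (y + a) hz hzo (by omega) (by omega)
      have hkey := key n a (y + a) y 0 hn (hok a (Finset.mem_insert_self a _))
        (by omega) (Or.inl rfl) hy (by rw [pow_zero, one_mul])
      rw [pow_zero, one_mul] at hkey
      rw [Finset.card_insert_of_notMem ha]
      have h2 : Mf n (y + a) * 2 ^ ((n - 1) * F.card)
          ≤ (2 ^ (n - 1) * Mf n y) * 2 ^ ((n - 1) * F.card) :=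
        Nat.mul_le_mul_right _ hkey
      calc 2 ^ G * Mf n z ≤ Mf n (y + a) * 2 ^ ((n - 1) * F.card) := hih
      _ ≤ (2 ^ (n - 1) * Mf n y) * 2 ^ ((n - 1) * F.card) := h2
      _ = Mf n y * 2 ^ ((n - 1) * (F.card + 1)) := by
          rw [Nat.mul_add, pow_add, Nat.mul_one]; ring

lemma Nf_pow_mul (n : ℕ) : ∀ v z : ℕ, z % 2 = 1 → Nf n (2 ^ v * z) = 2 ^ v * Mf n z := by
  intro v
  induction v with
  | zero => intro z hz; rw [pow_zero, one_mul, one_mul, Nf_odd n z hz]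
  | succ v ih =>
    intro z hz
    have h1 : 2 ^ (v + 1) * z = 2 * (2 ^ v * z) := by ring
    rw [h1, Nf_two_mul n _ (Nat.mul_ne_zero (by positivity) (by omega)), ih z hz, pow_succ]
    ring

lemma batch (n : ℕ) (hn : 12 ≤ n) (F : Finset ℕ) (hF : ∀ i ∈ F, Dok n i)
    (x y : ℕ) (hx : 1 ≤ x) (hy : 1 ≤ y) (heq : y + ∑ i ∈ F, i = 2 * x) :
    2 * Nf n x ≤ Nf n y * 2 ^ ((n - 1) * F.card) := by
  obtain ⟨v, z, hznd, hxeq⟩ := Nat.exists_eq_pow_mul_and_not_dvd (show x ≠ 0 by omega) 2 (by norm_num)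
  have hzodd : z % 2 = 1 := by
    have : z % 2 ≠ 0 := fun h => hznd (Nat.dvd_of_mod_eq_zero h)
    omega
  have hNx : Nf n x = 2 ^ v * Mf n z := by rw [hxeq]; exact Nf_pow_mul n v z hzodd
  rcases F.eq_empty_or_nonempty with rfl | hFne
  · simp only [Finset.sum_empty, add_zero] at heq
    rw [Finset.card_empty, Nat.mul_zero, pow_zero, Nat.mul_one]
    rw [heq, Nf_two_mul n x (by omega)]
  · have hz1 : 1 ≤ z := by
      rcases Nat.eq_zero_or_pos z with rfl | h
      · simp at hzodd
      · exact h
    have heq2 : y + ∑ i ∈ F, i = 2 ^ (v + 1) * z := by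
      rw [heq, hxeq]; ring
    have hc := chain n hn F hFne hF z (v + 1) y hz1 (Or.inr hzodd) hy heq2
    calc 2 * Nf n x = 2 ^ (v + 1) * Mf n z := by rw [hNx, pow_succ]; ring
    _ ≤ Mf n y * 2 ^ ((n - 1) * F.card) := hc
    _ ≤ Nf n y * 2 ^ ((n - 1) * F.card) := Nat.mul_le_mul_right _ (Nf_ge_Mf n y)




section Dyn
variable (ℓ : ℕ)

lemma Mpos (hl : 1 ≤ ℓ) : 1 ≤ 2 ^ ℓ - 1 := by
  have : (2:ℕ) ^ 1 ≤ 2 ^ ℓ := Nat.pow_le_pow_right (by norm_num) hl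
  simp at this; omega

lemma pow_split (hl : 1 ≤ ℓ) : 2 ^ ℓ = 2 * 2 ^ (ℓ - 1) := by
  rw [← pow_succ']; congr 1; omega

lemma shift2_eq (hl : 1 ≤ ℓ) (v : ℕ) (hv : v ≤ 2 ^ ℓ - 1) :
    shift2 ℓ v + (2 ^ ℓ - 1) * (if 2 ^ (ℓ - 1) ≤ v then 1 else 0) = 2 * v := by
  have hps := pow_split ℓ hl
  unfold shift2
  rcases eq_or_ne v (2 ^ ℓ - 1) with rfl | hne
  · rw [if_pos rfl, if_pos (by omega)]
    omega
  · rw [if_neg hne]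
    have hvlt : v < 2 ^ ℓ - 1 := by omega
    rcases lt_or_ge v (2 ^ (ℓ - 1)) with h | h
    · rw [if_neg (by omega)]
      rw [Nat.mod_eq_of_lt (by omega)]
      omega
    · rw [if_pos h]
      have h1 : 2 * v % (2 ^ ℓ - 1) = (2 * v - (2 ^ ℓ - 1)) % (2 ^ ℓ - 1) := by
        rw [Nat.mod_eq_sub_mod (by omega)]
      rw [h1, Nat.mod_eq_of_lt (by omega)]
      omega

lemma shift2_le (hl : 1 ≤ ℓ) (v : ℕ) (hv : v ≤ 2 ^ ℓ - 1) : shift2 ℓ v ≤ 2 ^ ℓ - 1 := by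
  unfold shift2
  rcases eq_or_ne v (2 ^ ℓ - 1) with rfl | hne
  · rw [if_pos rfl]
  · rw [if_neg hne]
    have := Nat.mod_lt (2 * v) (show 0 < 2 ^ ℓ - 1 from Mpos ℓ hl)
    omega

lemma shift2_pos (hl : 1 ≤ ℓ) (v : ℕ) (hv1 : 1 ≤ v) (hv : v ≤ 2 ^ ℓ - 1) : 1 ≤ shift2 ℓ v := by
  have he := shift2_eq ℓ hl v hv
  have hps := pow_split ℓ hl
  rcases le_or_gt (2 ^ (ℓ - 1)) v with h | h
  · rw [if_pos h] at he; omega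
  · rw [if_neg (by omega)] at he; omega

lemma it_le (hl : 1 ≤ ℓ) (u : ℕ) (hu : u ≤ 2 ^ ℓ - 1) : ∀ k, (shift2 ℓ)^[k] u ≤ 2 ^ ℓ - 1 := by
  intro k
  induction k with
  | zero => simpa using hu
  | succ k ih => rw [Function.iterate_succ_apply']; exact shift2_le ℓ hl _ ih

lemma it_pos (hl : 1 ≤ ℓ) (u : ℕ) (hu1 : 1 ≤ u) (hu : u ≤ 2 ^ ℓ - 1) : ∀ k, 1 ≤ (shift2 ℓ)^[k] u := by
  intro k
  induction k with
  | zero => simpa using hu1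
  | succ k ih =>
    rw [Function.iterate_succ_apply']
    exact shift2_pos ℓ hl _ ih (it_le ℓ hl u hu k)

lemma shift2_mod (hl : 1 ≤ ℓ) (w : ℕ) (hw : w < 2 ^ ℓ - 1) : shift2 ℓ w = 2 * w % (2 ^ ℓ - 1) := by
  unfold shift2; rw [if_neg (by omega)]

lemma it_rot (hl : 1 ≤ ℓ) (u : ℕ) (hu : u < 2 ^ ℓ - 1) : ∀ k, (shift2 ℓ)^[k] u = u * 2 ^ k % (2 ^ ℓ - 1) := by
  intro k
  induction k with
  | zero => simp [Nat.mod_eq_of_lt hu]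
  | succ k ih =>
    rw [Function.iterate_succ_apply', ih]
    have hlt : u * 2 ^ k % (2 ^ ℓ - 1) < 2 ^ ℓ - 1 := Nat.mod_lt _ (Mpos ℓ hl)
    rw [shift2_mod ℓ hl _ hlt]
    rw [Nat.mul_comm 2 (u * 2 ^ k % (2 ^ ℓ - 1)), Nat.mod_mul_mod]
    congr 1
    rw [pow_succ]
    ring

lemma it_fix : ∀ k, (shift2 ℓ)^[k] (2 ^ ℓ - 1) = 2 ^ ℓ - 1 := by
  intro k
  induction k with
  | zero => simp
  | succ k ih =>
    rw [Function.iterate_succ_apply', ih]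
    unfold shift2
    rw [if_pos rfl]

lemma it_id (hl : 1 ≤ ℓ) (u : ℕ) (hu : u ≤ 2 ^ ℓ - 1) : (shift2 ℓ)^[ℓ] u = u := by
  rcases eq_or_ne u (2 ^ ℓ - 1) with rfl | hne
  · exact it_fix ℓ ℓ
  · have hult : u < 2 ^ ℓ - 1 := by omega
    rw [it_rot ℓ hl u hult ℓ]
    have h1 : u * 2 ^ ℓ = (2 ^ ℓ - 1) * u + u := by
      have : 1 ≤ 2 ^ ℓ := Nat.one_le_two_pow
      have h2 : (2 ^ ℓ - 1) * u = 2 ^ ℓ * u - u := by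
        rw [tsub_mul, one_mul]
      rw [h2]
      have : u ≤ 2 ^ ℓ * u := Nat.le_mul_of_pos_left u (by omega)
      have hcm : u * 2 ^ ℓ = 2 ^ ℓ * u := mul_comm _ _
      omega
    rw [h1, Nat.mul_add_mod, Nat.mod_eq_of_lt hult]

lemma rot_top (hl : 1 ≤ ℓ) (k u : ℕ) (hk : k < ℓ) (hu0 : 0 < u) (hu : u < 2 ^ ℓ - 1) :
    (2 ^ (ℓ - 1) ≤ u * 2 ^ k % (2 ^ ℓ - 1)) ↔ u / 2 ^ (ℓ - 1 - k) % 2 = 1 := by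
  have hm1 : 1 ≤ ℓ - k := by omega
  set A := 2 ^ k with hA
  set B := 2 ^ (ℓ - k) with hB
  set C := 2 ^ (ℓ - 1 - k) with hC
  have hA1 : 1 ≤ A := Nat.one_le_two_pow
  have hC1 : 1 ≤ C := Nat.one_le_two_pow
  have hBC : B = C * 2 := by
    rw [hB, hC, ← pow_succ]; congr 1; omega
  have hAB : A * B = 2 ^ ℓ := by rw [hA, hB, ← pow_add]; congr 1; omega
  have hAC : A * C = 2 ^ (ℓ - 1) := by rw [hA, hC, ← pow_add]; congr 1; omega
  obtain ⟨q, r, hqr, hrB, hr⟩ : ∃ q r, B * q + r = u ∧ r < B ∧ r = u % B :=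
    ⟨u / B, u % B, Nat.div_add_mod u B, Nat.mod_lt _ (by omega), rfl⟩
  have huAB : u + 2 ≤ A * B := by rw [hAB]; omega
  have hqA : q + 1 ≤ A := by
    have hBq : B * q < B * A := by
      have hcm : B * A = A * B := mul_comm B A
      omega
    exact Nat.lt_of_mul_lt_mul_left hBq
  have hlt : q + r * A + 2 ≤ A * B := by
    rcases eq_or_lt_of_le (show r + 1 ≤ B by omega) with hr1 | hr1
    · have hexp : B * (q + 1) = B * q + B := by ring
      have hcomm : B * A = A * B := mul_comm B A
      have hBq : B * (q + 1) < B * A := by omega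
      have hq2 : q + 1 < A := Nat.lt_of_mul_lt_mul_left hBq
      have hexp2 : A * r + A = A * B := by
        have h5 : A * (r + 1) = A * B := by rw [hr1]
        rw [← h5]; ring
      have hcomm2 : r * A = A * r := mul_comm r A
      omega
    · have h1 : A * (r + 2) ≤ A * B := Nat.mul_le_mul_left A (by omega)
      have hexp : A * (r + 2) = A * r + 2 * A := by ring
      have hcomm2 : r * A = A * r := mul_comm r A
      omega
  have hval : u * A % (2 ^ ℓ - 1) = q + r * A := by
    have hab1 : 1 ≤ A * B := by omega
    have h1 : (A * B - 1) * q + q = A * B * q := by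
      zify [hab1]
      ring
    have hu3 : u * A = A * B * q + r * A := by
      rw [← hqr]; ring
    have hsplit : u * A = (A * B - 1) * q + (q + r * A) := by omega
    rw [hsplit, ← hAB]
    rw [Nat.mul_add_mod, Nat.mod_eq_of_lt (by omega)]
  have hconn : r / C = u / C % 2 := by
    rw [hr, hBC]
    exact Nat.mod_mul_right_div_self u C 2
  rw [hval, ← hAC]
  constructor
  · intro h
    by_contra hcon
    have hrC : r / C = 0 ∨ r / C = 1 := by
      have h2' : r / C < 2 := Nat.div_lt_of_lt_mul (by omega)
      generalize r / C = t at h2' ⊢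
      omega
    have hrC0 : r / C = 0 := by
      rcases hrC with h0 | h1
      · exact h0
      · exact absurd (by rw [← hconn, h1]) hcon
    have hrltC : r < C := by
      rcases lt_or_ge r C with h' | h'
      · exact h'
      · exfalso
        have h6 := (Nat.one_le_div_iff (show 0 < C by omega)).mpr h'
        omega
    have h2 : A * (r + 1) ≤ A * C := Nat.mul_le_mul_left A (by omega)
    have hexp : A * (r + 1) = A * r + A := by ring
    have hcomm2 : r * A = A * r := mul_comm r A
    omega
  · intro h
    have hrC1 : r / C = 1 := by rw [hconn, h]
    have hCr : C ≤ r := by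
      rcases le_or_gt C r with h' | h'
      · exact h'
      · exfalso
        rw [Nat.div_eq_of_lt h'] at hrC1
        omega
    have h2 : C * A ≤ r * A := Nat.mul_le_mul_right A hCr
    have hcomm2 : C * A = A * C := mul_comm C A
    omega

end Dyn

lemma count_tops (ℓ : ℕ) (hl : 1 ≤ ℓ) (u : ℕ) (hu : u ≤ 2 ^ ℓ - 1) :
    (∑ k ∈ Finset.range ℓ, if 2 ^ (ℓ - 1) ≤ (shift2 ℓ)^[k] u then 1 else 0) = s2 u := by
  have hM1 : 1 ≤ 2 ^ ℓ - 1 := Mpos ℓ hl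
  rcases eq_or_ne u (2 ^ ℓ - 1) with rfl | hne
  · -- u = 2^ℓ - 1 : all iterates fixed, all tops
    have hcond : ∀ k, (if 2 ^ (ℓ - 1) ≤ (shift2 ℓ)^[k] (2 ^ ℓ - 1) then (1:ℕ) else 0) = 1 := by
      intro k
      rw [it_fix ℓ k, if_pos]
      have := pow_split ℓ hl
      omega
    rw [Finset.sum_congr rfl (fun k _ => hcond k), Finset.sum_const, Finset.card_range,
      smul_eq_mul, mul_one]
    have hlt : 2 ^ ℓ - 1 < 2 ^ ℓ := by omega
    rw [← s2_eq_bits ℓ (2 ^ ℓ - 1) hlt]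
    have hterm : ∀ j ∈ Finset.range ℓ, (if (2 ^ ℓ - 1) / 2 ^ j % 2 = 1 then (1:ℕ) else 0) = 1 := by
      intro j hj
      have hjlt : j < ℓ := Finset.mem_range.mp hj
      rw [pow_sub_one_div ℓ j (by omega)]
      obtain ⟨w, hw1, hwe⟩ : ∃ w, 1 ≤ w ∧ ℓ - j = w := ⟨ℓ - j, by omega, rfl⟩
      rw [hwe]
      obtain ⟨P, hP⟩ : ∃ P, 2 ^ w = P := ⟨_, rfl⟩
      obtain ⟨Q, hQ⟩ : ∃ Q, 2 ^ (w - 1) = Q := ⟨_, rfl⟩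
      rw [hP]
      have h2 : P = 2 * Q := by rw [← hP, ← hQ]; exact pow_split w hw1
      have hQ1 : 1 ≤ Q := by rw [← hQ]; exact Nat.one_le_two_pow
      have hcp : (P - 1) % 2 = 1 := by omega
      rw [if_pos hcp]
    rw [Finset.sum_congr rfl hterm, Finset.sum_const, Finset.card_range, smul_eq_mul, mul_one]
  · have hult : u < 2 ^ ℓ - 1 := by omega
    rcases Nat.eq_zero_or_pos u with rfl | hu0
    · have hz : ∀ k, (shift2 ℓ)^[k] 0 = 0 := by
        intro k
        induction k with
        | zero => simp
        | succ k ih =>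
          rw [Function.iterate_succ_apply', ih]
          unfold shift2
          rw [if_neg (by omega)]
          simp
      have hcond : ∀ k ∈ Finset.range ℓ,
          (if 2 ^ (ℓ - 1) ≤ (shift2 ℓ)^[k] 0 then (1:ℕ) else 0) = 0 := by
        intro k _
        rw [hz k, if_neg]
        have : (1:ℕ) ≤ 2 ^ (ℓ - 1) := Nat.one_le_two_pow
        omega
      rw [Finset.sum_congr rfl hcond, Finset.sum_const, smul_eq_mul, mul_zero]
      simp [s2]
    · have hterm : ∀ k ∈ Finset.range ℓ,
          (if 2 ^ (ℓ - 1) ≤ (shift2 ℓ)^[k] u then (1:ℕ) else 0)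
          = (if u / 2 ^ (ℓ - 1 - k) % 2 = 1 then 1 else 0) := by
        intro k hk
        rw [it_rot ℓ hl u hult k]
        exact if_congr (rot_top ℓ hl k u (Finset.mem_range.mp hk) hu0 hult) rfl rfl
      rw [Finset.sum_congr rfl hterm]
      rw [Finset.sum_range_reflect (fun j => if u / 2 ^ j % 2 = 1 then (1:ℕ) else 0) ℓ]
      exact s2_eq_bits ℓ u (by omega)

-- PART 6: main lower bound (to be appended after all previous parts)

def Sfun (D : Finset ℕ) (ℓ : ℕ) (U : ℕ → ℕ) (k : ℕ) : ℕ :=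
  ∑ i ∈ D, i * (shift2 ℓ)^[k] (U i)

def Bfun (D : Finset ℕ) (ℓ : ℕ) (U : ℕ → ℕ) (k : ℕ) : Finset ℕ :=
  D.filter (fun i => 2 ^ (ℓ - 1) ≤ (shift2 ℓ)^[k] (U i))

lemma lower_bound (n : ℕ) (hn : 12 ≤ n) (D : Finset ℕ) (hD : ∀ i ∈ D, Dok n i)
    (ℓ : ℕ) (U : ℕ → ℕ) (h : IsSolution D ℓ U) : ℓ ≤ (n - 1) * weight D U := by
  obtain ⟨hl, hbdd, hsupp, hdvd0, hpos0⟩ := h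
  have hM1 : 1 ≤ 2 ^ ℓ - 1 := Mpos ℓ hl
  have hvle : ∀ k i, (shift2 ℓ)^[k] (U i) ≤ 2 ^ ℓ - 1 :=
    fun k i => it_le ℓ hl (U i) (hbdd i) k
  have hS0 : Sfun D ℓ U 0 = ∑ i ∈ D, i * U i := by
    unfold Sfun
    exact Finset.sum_congr rfl (fun i _ => by rw [Function.iterate_zero_apply])
  -- recurrence
  have hrec : ∀ k, Sfun D ℓ U (k + 1) + (2 ^ ℓ - 1) * (∑ i ∈ Bfun D ℓ U k, i)
      = 2 * Sfun D ℓ U k := by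
    intro k
    have h1 : ∀ i ∈ D, 2 * (i * (shift2 ℓ)^[k] (U i))
        = i * (shift2 ℓ)^[k+1] (U i)
          + (2 ^ ℓ - 1) * (if 2 ^ (ℓ - 1) ≤ (shift2 ℓ)^[k] (U i) then i else 0) := by
      intro i _
      have he := shift2_eq ℓ hl ((shift2 ℓ)^[k] (U i)) (hvle k i)
      have hv1 : (shift2 ℓ)^[k+1] (U i) = shift2 ℓ ((shift2 ℓ)^[k] (U i)) :=
        Function.iterate_succ_apply' _ _ _
      rw [hv1]
      rcases le_or_gt (2 ^ (ℓ - 1)) ((shift2 ℓ)^[k] (U i)) with hc | hc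
      · rw [if_pos hc] at he ⊢
        calc 2 * (i * (shift2 ℓ)^[k] (U i)) = i * (2 * (shift2 ℓ)^[k] (U i)) := by ring
        _ = i * (shift2 ℓ ((shift2 ℓ)^[k] (U i)) + (2 ^ ℓ - 1) * 1) := by rw [he]
        _ = i * shift2 ℓ ((shift2 ℓ)^[k] (U i)) + (2 ^ ℓ - 1) * i := by ring
      · rw [if_neg (by omega)] at he ⊢
        calc 2 * (i * (shift2 ℓ)^[k] (U i)) = i * (2 * (shift2 ℓ)^[k] (U i)) := by ring
        _ = i * (shift2 ℓ ((shift2 ℓ)^[k] (U i)) + (2 ^ ℓ - 1) * 0) := by rw [he]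
        _ = i * shift2 ℓ ((shift2 ℓ)^[k] (U i)) + (2 ^ ℓ - 1) * 0 := by ring
    have h2 : 2 * Sfun D ℓ U k
        = ∑ i ∈ D, (i * (shift2 ℓ)^[k+1] (U i)
            + (2 ^ ℓ - 1) * (if 2 ^ (ℓ - 1) ≤ (shift2 ℓ)^[k] (U i) then i else 0)) := by
      unfold Sfun
      rw [Finset.mul_sum]
      exact Finset.sum_congr rfl h1
    rw [h2, Finset.sum_add_distrib]
    congr 1
    rw [← Finset.mul_sum]
    congr 1
    rw [Bfun, Finset.sum_filter]
  -- divisibility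
  have hdvd : ∀ k, (2 ^ ℓ - 1) ∣ Sfun D ℓ U k := by
    intro k
    induction k with
    | zero => rw [hS0]; exact hdvd0
    | succ k ih =>
      have h := hrec k
      have h2 : Sfun D ℓ U (k+1) = 2 * Sfun D ℓ U k - (2 ^ ℓ - 1) * (∑ i ∈ Bfun D ℓ U k, i) := by
        omega
      rw [h2]
      exact Nat.dvd_sub (Dvd.dvd.mul_left ih 2) (dvd_mul_right _ _)
  -- positivity
  obtain ⟨i₀, hi₀D, hi₀⟩ : ∃ i ∈ D, 0 < U i := by
    by_contra hc
    push_neg at hc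
    have hz : ∑ i ∈ D, i * U i = 0 :=
      Finset.sum_eq_zero (fun i hi => by
        have : U i = 0 := Nat.le_zero.mp (hc i hi)
        rw [this, Nat.mul_zero])
    omega
  have hi₀1 : 1 ≤ i₀ := by
    have := (hD i₀ hi₀D).1
    omega
  have hpos : ∀ k, 1 ≤ Sfun D ℓ U k := by
    intro k
    have hterm : 1 ≤ i₀ * (shift2 ℓ)^[k] (U i₀) :=
      Nat.one_le_iff_ne_zero.mpr (Nat.mul_ne_zero (by omega)
        (by have := it_pos ℓ hl (U i₀) hi₀ (hbdd i₀) k; omega))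
    calc 1 ≤ i₀ * (shift2 ℓ)^[k] (U i₀) := hterm
    _ ≤ Sfun D ℓ U k :=
      Finset.single_le_sum (f := fun i => i * (shift2 ℓ)^[k] (U i))
        (fun i _ => Nat.zero_le _) hi₀D
  -- phi
  have hφ : ∀ k, (2 ^ ℓ - 1) * (Sfun D ℓ U k / (2 ^ ℓ - 1)) = Sfun D ℓ U k :=
    fun k => Nat.mul_div_cancel' (hdvd k)
  have hφpos : ∀ k, 1 ≤ Sfun D ℓ U k / (2 ^ ℓ - 1) := by
    intro k
    have hle2 : 2 ^ ℓ - 1 ≤ Sfun D ℓ U k := Nat.le_of_dvd (hpos k) (hdvd k)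
    exact (Nat.one_le_div_iff (by omega)).mpr hle2
  have hφrec : ∀ k, (Sfun D ℓ U (k+1) / (2 ^ ℓ - 1)) + (∑ i ∈ Bfun D ℓ U k, i)
      = 2 * (Sfun D ℓ U k / (2 ^ ℓ - 1)) := by
    intro k
    apply Nat.eq_of_mul_eq_mul_left (show 0 < 2 ^ ℓ - 1 by omega)
    calc (2 ^ ℓ - 1) * ((Sfun D ℓ U (k+1) / (2 ^ ℓ - 1)) + ∑ i ∈ Bfun D ℓ U k, i)
        = (2 ^ ℓ - 1) * (Sfun D ℓ U (k+1) / (2 ^ ℓ - 1))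
          + (2 ^ ℓ - 1) * ∑ i ∈ Bfun D ℓ U k, i := by ring
    _ = Sfun D ℓ U (k+1) + (2 ^ ℓ - 1) * ∑ i ∈ Bfun D ℓ U k, i := by rw [hφ]
    _ = 2 * Sfun D ℓ U k := hrec k
    _ = 2 * ((2 ^ ℓ - 1) * (Sfun D ℓ U k / (2 ^ ℓ - 1))) := by rw [hφ]
    _ = (2 ^ ℓ - 1) * (2 * (Sfun D ℓ U k / (2 ^ ℓ - 1))) := by ring
  -- batch step
  have hstep : ∀ k, 2 * Nf n (Sfun D ℓ U k / (2 ^ ℓ - 1))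
      ≤ Nf n (Sfun D ℓ U (k+1) / (2 ^ ℓ - 1)) * 2 ^ ((n - 1) * (Bfun D ℓ U k).card) := by
    intro k
    refine batch n hn (Bfun D ℓ U k) ?_ _ _ (hφpos k) (hφpos (k+1)) (hφrec k)
    intro i hi
    exact hD i (Finset.mem_filter.mp hi).1
  -- telescope
  have htele : ∀ k, 2 ^ k * Nf n (Sfun D ℓ U 0 / (2 ^ ℓ - 1))
      ≤ Nf n (Sfun D ℓ U k / (2 ^ ℓ - 1))
        * 2 ^ ((n - 1) * ∑ j ∈ Finset.range k, (Bfun D ℓ U j).card) := by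
    intro k
    induction k with
    | zero => simp
    | succ k ih =>
      have h1 : (2:ℕ) ^ (k+1) * Nf n (Sfun D ℓ U 0 / (2 ^ ℓ - 1))
          = 2 * (2 ^ k * Nf n (Sfun D ℓ U 0 / (2 ^ ℓ - 1))) := by ring
      rw [h1]
      calc 2 * (2 ^ k * Nf n (Sfun D ℓ U 0 / (2 ^ ℓ - 1)))
          ≤ 2 * (Nf n (Sfun D ℓ U k / (2 ^ ℓ - 1))
              * 2 ^ ((n - 1) * ∑ j ∈ Finset.range k, (Bfun D ℓ U j).card)) :=
            Nat.mul_le_mul_left 2 ih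
      _ = (2 * Nf n (Sfun D ℓ U k / (2 ^ ℓ - 1)))
            * 2 ^ ((n - 1) * ∑ j ∈ Finset.range k, (Bfun D ℓ U j).card) := by ring
      _ ≤ (Nf n (Sfun D ℓ U (k+1) / (2 ^ ℓ - 1)) * 2 ^ ((n - 1) * (Bfun D ℓ U k).card))
            * 2 ^ ((n - 1) * ∑ j ∈ Finset.range k, (Bfun D ℓ U j).card) :=
            Nat.mul_le_mul_right _ (hstep k)
      _ = Nf n (Sfun D ℓ U (k+1) / (2 ^ ℓ - 1))
            * 2 ^ ((n - 1) * ∑ j ∈ Finset.range (k+1), (Bfun D ℓ U j).card) := by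
          rw [Finset.sum_range_succ, Nat.mul_add, pow_add]
          ring
  -- closing the cycle
  have hfix : Sfun D ℓ U ℓ = Sfun D ℓ U 0 := by
    unfold Sfun
    refine Finset.sum_congr rfl (fun i _ => ?_)
    rw [it_id ℓ hl (U i) (hbdd i), Function.iterate_zero_apply]
  have hfinal := htele ℓ
  rw [hfix] at hfinal
  have hNpos := Nf_pos n (Sfun D ℓ U 0 / (2 ^ ℓ - 1))
  have h2l : 2 ^ ℓ ≤ 2 ^ ((n - 1) * ∑ j ∈ Finset.range ℓ, (Bfun D ℓ U j).card) := by
    have h3 : Nf n (Sfun D ℓ U 0 / (2 ^ ℓ - 1)) * 2 ^ ℓ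
        ≤ Nf n (Sfun D ℓ U 0 / (2 ^ ℓ - 1))
          * 2 ^ ((n - 1) * ∑ j ∈ Finset.range ℓ, (Bfun D ℓ U j).card) := by
      calc Nf n (Sfun D ℓ U 0 / (2 ^ ℓ - 1)) * 2 ^ ℓ
          = 2 ^ ℓ * Nf n (Sfun D ℓ U 0 / (2 ^ ℓ - 1)) := by ring
      _ ≤ _ := hfinal
    exact Nat.le_of_mul_le_mul_left (by
      calc Nf n (Sfun D ℓ U 0 / (2 ^ ℓ - 1)) * 2 ^ ℓ ≤ _ := h3) (by omega)
  have hle : ℓ ≤ (n - 1) * ∑ j ∈ Finset.range ℓ, (Bfun D ℓ U j).card :=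
    (Nat.pow_le_pow_iff_right (by norm_num : 1 < 2)).mp h2l
  -- weight identity
  have hw : ∑ j ∈ Finset.range ℓ, (Bfun D ℓ U j).card = weight D U := by
    have h1 : ∀ j, (Bfun D ℓ U j).card
        = ∑ i ∈ D, if 2 ^ (ℓ - 1) ≤ (shift2 ℓ)^[j] (U i) then 1 else 0 := by
      intro j
      rw [Bfun, Finset.card_filter]
    rw [Finset.sum_congr rfl (fun j _ => h1 j), Finset.sum_comm]
    unfold weight
    exact Finset.sum_congr rfl (fun i _ => count_tops ℓ hl (U i) (hbdd i))
  rw [hw] at hle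
  exact hle


/-- For `n` large enough and odd `d` with `3·2^{n−1} − 1 < d < 2^{n+1} − 7`, the
2-density of `D = {i : 1 ≤ i ≤ d, i odd} \ {2^n − 1, 3·2^{n−1} − 1}` is `1/(n−1)`:
every solution of length `ℓ` satisfies `(n−1)·s(U) ≥ ℓ`, and some solution attains
equality. -/
theorem density_case_iii_b :
    ∃ N : ℕ, ∀ n : ℕ, N ≤ n → ∀ d : ℕ, d % 2 = 1 →
      3 * 2 ^ (n - 1) - 1 < d → d < 2 ^ (n + 1) - 7 →
      (∀ ℓ U, IsSolution (((oddUpTo d).erase (2 ^ n - 1)).erase (3 * 2 ^ (n - 1) - 1)) ℓ U →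
        ℓ ≤ (n - 1) * weight (((oddUpTo d).erase (2 ^ n - 1)).erase (3 * 2 ^ (n - 1) - 1)) U) ∧
      (∃ ℓ U, IsSolution (((oddUpTo d).erase (2 ^ n - 1)).erase (3 * 2 ^ (n - 1) - 1)) ℓ U ∧
        ℓ = (n - 1) * weight (((oddUpTo d).erase (2 ^ n - 1)).erase (3 * 2 ^ (n - 1) - 1)) U) := by
  refine ⟨12, fun n hn d hdodd hdlo hdhi => ?_⟩
  have hp2048 : 2048 ≤ 2 ^ (n - 1) := by
    calc (2048:ℕ) = 2 ^ 11 := by norm_num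
    _ ≤ 2 ^ (n - 1) := Nat.pow_le_pow_right (by norm_num) (by omega)
  have h2n : 2 ^ n = 2 * 2 ^ (n - 1) := by
    rw [← pow_succ']
    congr 1
    omega
  have h4p : (2:ℕ) ^ (n + 1) = 4 * 2 ^ (n - 1) := by
    rw [show n + 1 = (n - 1) + 2 by omega, pow_add]
    ring
  have hpeven : 2 ^ (n - 1) % 2 = 0 := by
    rw [show n - 1 = (n - 2) + 1 by omega, pow_succ]
    omega
  -- membership facts about D
  have hDok : ∀ i ∈ ((oddUpTo d).erase (2 ^ n - 1)).erase (3 * 2 ^ (n - 1) - 1), Dok n i := by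
    intro i hi
    obtain ⟨hne1, hrest⟩ := Finset.mem_erase.mp hi
    obtain ⟨hne2, hmem⟩ := Finset.mem_erase.mp hrest
    obtain ⟨hr, hodd⟩ := Finset.mem_filter.mp hmem
    have hid : i < d + 1 := Finset.mem_range.mp hr
    refine ⟨hodd, ?_, ?_, ?_⟩
    · -- i + 9 ≤ 2^(n+1)
      omega
    · -- i + 1 ≠ 2^n
      intro hcon
      apply hne2
      omega
    · -- i + 1 ≠ 3 * 2^(n-1)
      intro hcon
      apply hne1
      have h3p : 1 ≤ 3 * 2 ^ (n - 1) := by omega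
      omega
  constructor
  · intro ℓ U hsol
    exact lower_bound n hn _ hDok ℓ U hsol
  · -- the extremal solution
    set a := 2 ^ (n - 1) - 1 with ha
    have haD : a ∈ ((oddUpTo d).erase (2 ^ n - 1)).erase (3 * 2 ^ (n - 1) - 1) := by
      rw [Finset.mem_erase, Finset.mem_erase]
      refine ⟨by omega, by omega, ?_⟩
      rw [oddUpTo, Finset.mem_filter, Finset.mem_range]
      constructor
      · omega
      · omega
    refine ⟨n - 1, sol1 a, ⟨by omega, ?_, ?_, ?_, ?_⟩, ?_⟩
    · -- bounded
      intro i
      unfold sol1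
      split <;> omega
    · -- support
      intro i hi
      unfold sol1
      rw [if_neg]
      intro he
      exact hi (he ▸ haD)
    · -- dvd
      have hsum : ∑ i ∈ ((oddUpTo d).erase (2 ^ n - 1)).erase (3 * 2 ^ (n - 1) - 1),
          i * sol1 a i = a := by
        rw [Finset.sum_eq_single_of_mem a haD (fun b _ hb => by
          unfold sol1
          rw [if_neg hb, Nat.mul_zero])]
        unfold sol1
        rw [if_pos rfl, Nat.mul_one]
      rw [hsum]
    · -- pos
      have hsum : ∑ i ∈ ((oddUpTo d).erase (2 ^ n - 1)).erase (3 * 2 ^ (n - 1) - 1),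
          i * sol1 a i = a := by
        rw [Finset.sum_eq_single_of_mem a haD (fun b _ hb => by
          unfold sol1
          rw [if_neg hb, Nat.mul_zero])]
        unfold sol1
        rw [if_pos rfl, Nat.mul_one]
      rw [hsum]
      omega
    · -- equality of length and (n-1) * weight
      have hwt : weight (((oddUpTo d).erase (2 ^ n - 1)).erase (3 * 2 ^ (n - 1) - 1)) (sol1 a)
          = 1 := by
        unfold weight
        rw [Finset.sum_eq_single_of_mem a haD (fun b _ hb => by
          unfold sol1
          rw [if_neg hb]
          simp [s2])]
        unfold sol1
        rw [if_pos rfl]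
        simp [s2]
      rw [hwt, Nat.mul_one]
end

section
/- There exists N such that for all n ≥ N the following holds. Let a ≥ 1, q = 2^a, and let f(x) = ∑_{i=0}^{g} c_{2i+1} x^{2i+1} ∈ F_q[x] with c_{2g+1} ≠ 0, where 2^n − 1 < 2g + 1 < 3·2^{n−1} − 1. If c_{2^n − 1} = 0, then for every m ≥ 1 the integer S_m(f) is divisible by 2^{⌈a·m/(n−1)⌉} (i.e. the first slope of the associated Newton polygon is at least 1/(n−1)). -/
open Finset

lemma zmod2_pow_eq (z : ZMod 2) {k : ℕ} (hk : k ≠ 0) : z ^ k = z := by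
  fin_cases z
  · show (0 : ZMod 2) ^ k = 0; exact zero_pow hk
  · show (1 : ZMod 2) ^ k = 1; exact one_pow k

lemma zmod2_neg_one_pow_add (z w : ZMod 2) :
    ((-1 : ℤ)) ^ (z + w).val = (-1 : ℤ) ^ z.val * (-1 : ℤ) ^ w.val := by revert z w; decide

lemma zmod2_neg_one_pow (z : ZMod 2) : ((-1 : ℤ)) ^ z.val = 1 + (-2) * (z.val : ℤ) := by
  revert z; decide

lemma zmod2_val_mul (z w : ZMod 2) : (((z * w).val : ℤ)) = (z.val : ℤ) * (w.val : ℤ) := by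
  revert z w; decide

lemma zmod2_mul_self (z : ZMod 2) : z * z = z := by revert z; decide

lemma zmod2_mul_eq_one (z w : ZMod 2) : z * w = 1 ↔ z = 1 ∧ w = 1 := by revert z w; decide

lemma neg_one_pow_sum {ι : Type*} (s : Finset ι) (f : ι → ZMod 2) :
    ((-1 : ℤ)) ^ (∑ j ∈ s, f j).val = ∏ j ∈ s, (-1 : ℤ) ^ (f j).val := by
  induction s using Finset.cons_induction with
  | empty => simp
  | cons j s hj ih => rw [Finset.sum_cons, Finset.prod_cons, zmod2_neg_one_pow_add, ih]

lemma zmod2_prod_eq_one_iff {ι : Type*} (s : Finset ι) (f : ι → ZMod 2) :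
    (∏ j ∈ s, f j) = 1 ↔ ∀ j ∈ s, f j = 1 := by
  induction s using Finset.cons_induction with
  | empty => simp
  | cons j s hj ih => rw [Finset.prod_cons, zmod2_mul_eq_one, ih]; simp

lemma zmod2_prod_subset_mul {ι : Type*} [DecidableEq ι] {C B : Finset ι} (h : C ⊆ B)
    (y : ι → ZMod 2) : (∏ i ∈ C, y i) * ∏ i ∈ B, y i = ∏ i ∈ B, y i := by
  rw [← Finset.prod_sdiff h]
  have : (∏ i ∈ C, y i) * ((∏ i ∈ B \ C, y i) * ∏ i ∈ C, y i)
      = (∏ i ∈ B \ C, y i) * ((∏ i ∈ C, y i) * ∏ i ∈ C, y i) := by ring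
  rw [this, ← Finset.prod_mul_distrib]
  congr 1
  exact Finset.prod_congr rfl fun i _ => zmod2_mul_self _

lemma zmod2_prod_union {ι : Type*} [DecidableEq ι] (A B : Finset ι) (y : ι → ZMod 2) :
    ∏ i ∈ A ∪ B, y i = (∏ i ∈ A, y i) * ∏ i ∈ B, y i := by
  have h1 : A ∪ B = A ∪ (B \ A) := by rw [Finset.union_sdiff_self_eq_union]
  rw [h1, Finset.prod_union Finset.disjoint_sdiff]
  have h3 : ∏ i ∈ B, y i = (∏ i ∈ B \ A, y i) * ∏ i ∈ A ∩ B, y i := by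
    rw [← Finset.prod_sdiff (Finset.inter_subset_right : A ∩ B ⊆ B)]
    congr 2
    ext x
    simp only [Finset.mem_sdiff, Finset.mem_inter]
    tauto
  have h4 := zmod2_prod_subset_mul (Finset.inter_subset_left : A ∩ B ⊆ A) y
  calc (∏ i ∈ A, y i) * ∏ i ∈ B \ A, y i
      = ((∏ i ∈ A ∩ B, y i) * ∏ i ∈ A, y i) * ∏ i ∈ B \ A, y i := by rw [h4]
    _ = (∏ i ∈ A, y i) * ((∏ i ∈ B \ A, y i) * ∏ i ∈ A ∩ B, y i) := by ring
    _ = (∏ i ∈ A, y i) * ∏ i ∈ B, y i := by rw [← h3]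

lemma zmod2_prod_biUnion {ι κ : Type*} [DecidableEq ι] [DecidableEq κ] (t : Finset ι)
    (T : ι → Finset κ) (y : κ → ZMod 2) :
    ∏ i ∈ t.biUnion T, y i = ∏ j ∈ t, ∏ i ∈ T j, y i := by
  induction t using Finset.induction with
  | empty => simp
  | insert _ _ hj ih =>
      rw [Finset.biUnion_insert, zmod2_prod_union, Finset.prod_insert hj, ih]

lemma zmod2_prod_image {ι κ : Type*} [DecidableEq κ] (s : Finset ι) (φ : ι → κ)
    (y : κ → ZMod 2) : ∏ i ∈ s.image φ, y i = ∏ j ∈ s, y (φ j) := by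
  classical
  induction s using Finset.induction with
  | empty => simp
  | @insert j s hj ih =>
      rw [Finset.image_insert, Finset.prod_insert hj, ← ih]
      by_cases h : φ j ∈ s.image φ
      · have h2 : y (φ j) * ∏ i ∈ s.image φ, y i = ∏ i ∈ s.image φ, y i := by
          simpa using zmod2_prod_subset_mul (Finset.singleton_subset_iff.2 h) y
        rw [Finset.insert_eq_self.2 h]; exact h2.symm
      · rw [Finset.prod_insert h]

lemma zmod2_ne_one {z : ZMod 2} (h : z ≠ 1) : z = 0 := by revert h; revert z; decide

lemma count_ones (v : ℕ) (U : Finset (Fin v)) :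
    ∑ y : Fin v → ZMod 2, (((∏ i ∈ U, y i).val : ℤ)) = 2 ^ (v - U.card) := by
  have h1 : ∀ y : Fin v → ZMod 2,
      (((∏ i ∈ U, y i).val : ℤ)) = if (∀ i ∈ U, y i = 1) then 1 else 0 := by
    intro y
    by_cases h : ∀ i ∈ U, y i = 1
    · rw [if_pos h, (zmod2_prod_eq_one_iff U y).2 h]; rfl
    · rw [if_neg h, zmod2_ne_one (fun hh => h ((zmod2_prod_eq_one_iff U y).1 hh))]; rfl
  simp_rw [h1]
  rw [Finset.sum_boole]
  have h2 : Finset.univ.filter (fun y : Fin v → ZMod 2 => ∀ i ∈ U, y i = 1)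
      = Fintype.piFinset (fun i => if i ∈ U then ({1} : Finset (ZMod 2)) else Finset.univ) := by
    ext y
    simp only [Finset.mem_filter, Finset.mem_univ, true_and, Fintype.mem_piFinset]
    constructor
    · intro h i
      by_cases hi : i ∈ U
      · rw [if_pos hi]; simp [h i hi]
      · rw [if_neg hi]; simp
    · intro h i hi
      have := h i; rw [if_pos hi] at this; simpa using this
  rw [h2, Fintype.card_piFinset]
  have h3 : ∀ i : Fin v, ((if i ∈ U then ({1} : Finset (ZMod 2)) else Finset.univ)).card
      = if i ∈ U then 1 else 2 := by
    intro i; split <;> simp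
  rw [Finset.prod_congr rfl (fun i _ => h3 i), Finset.prod_ite, Finset.prod_const,
    Finset.prod_const, one_pow, one_mul]
  have h4 : Finset.univ.filter (fun i => ¬ i ∈ U) = Uᶜ := by
    ext i; simp
  rw [h4, Finset.card_compl, Fintype.card_fin]
  push_cast
  ring

lemma zmod2_val_prod {ι : Type*} (t : Finset ι) (f : ι → ZMod 2) :
    (((∏ j ∈ t, f j).val : ℤ)) = ∏ j ∈ t, ((f j).val : ℤ) := by
  induction t using Finset.cons_induction with
  | empty => simp [ZMod.val_one]
  | cons j s hj ih => rw [Finset.prod_cons, Finset.prod_cons, zmod2_val_mul, ih]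

lemma core_div {ι : Type} [Fintype ι] [DecidableEq ι] (v d : ℕ) (hd : 1 ≤ d)
    (T : ι → Finset (Fin v)) (hT : ∀ j, (T j).card ≤ d) (a : ι → ZMod 2) :
    (2 : ℤ) ^ (⌈(v : ℚ) / (d : ℚ)⌉₊) ∣
      ∑ y : Fin v → ZMod 2, (-1 : ℤ) ^ (∑ j : ι, a j * ∏ i ∈ T j, y i).val := by
  set E := ⌈(v : ℚ) / (d : ℚ)⌉₊ with hE
  have key : ∀ y : Fin v → ZMod 2, (-1 : ℤ) ^ (∑ j : ι, a j * ∏ i ∈ T j, y i).val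
      = ∑ t ∈ (Finset.univ : Finset ι).powerset,
          (-2 : ℤ) ^ t.card * ((∏ j ∈ t, (a j * ∏ i ∈ T j, y i)).val : ℤ) := by
    intro y
    rw [neg_one_pow_sum]
    have : ∀ j : ι, (-1 : ℤ) ^ ((a j * ∏ i ∈ T j, y i)).val
        = (-2 : ℤ) * (((a j * ∏ i ∈ T j, y i)).val : ℤ) + 1 := by
      intro j; rw [zmod2_neg_one_pow]; ring
    rw [Finset.prod_congr rfl (fun j _ => this j), Finset.prod_add]
    refine Finset.sum_congr rfl fun t _ => ?_
    rw [Finset.prod_const_one, mul_one, Finset.prod_mul_distrib, Finset.prod_const, zmod2_val_prod]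
  simp_rw [key]
  rw [Finset.sum_comm]
  refine Finset.dvd_sum fun t _ => ?_
  have hval : ∀ y : Fin v → ZMod 2, ((∏ j ∈ t, (a j * ∏ i ∈ T j, y i)).val : ℤ)
      = ((∏ j ∈ t, a j).val : ℤ) * ((∏ i ∈ t.biUnion T, y i).val : ℤ) := by
    intro y
    rw [Finset.prod_mul_distrib, zmod2_val_mul, zmod2_prod_biUnion]
  have hsum : ∑ y : Fin v → ZMod 2,
        (-2 : ℤ) ^ t.card * ((∏ j ∈ t, (a j * ∏ i ∈ T j, y i)).val : ℤ)
      = (-2 : ℤ) ^ t.card * ((∏ j ∈ t, a j).val : ℤ) * 2 ^ (v - (t.biUnion T).card) := by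
    rw [← Finset.mul_sum]
    simp_rw [hval]
    rw [← Finset.mul_sum, count_ones, mul_assoc]
  rw [hsum]
  -- exponent bound
  have hu1 : (t.biUnion T).card ≤ d * t.card := by
    calc (t.biUnion T).card ≤ ∑ j ∈ t, (T j).card := Finset.card_biUnion_le
      _ ≤ ∑ _j ∈ t, d := Finset.sum_le_sum fun j _ => hT j
      _ = t.card * d := by rw [Finset.sum_const, smul_eq_mul]
      _ = d * t.card := by ring
  have hu2 : (t.biUnion T).card ≤ v := by
    simpa using Finset.card_le_univ (t.biUnion T)
  have hvu : v - (t.biUnion T).card ≤ d * (v - (t.biUnion T).card) :=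
    Nat.le_mul_of_pos_left _ hd
  have hnat : v ≤ (t.card + (v - (t.biUnion T).card)) * d := by
    have h0 : (t.biUnion T).card + (v - (t.biUnion T).card) = v := Nat.add_sub_cancel' hu2
    have h1 := Nat.add_le_add hu1 hvu
    calc v = (t.biUnion T).card + (v - (t.biUnion T).card) := h0.symm
      _ ≤ d * t.card + d * (v - (t.biUnion T).card) := h1
      _ = (t.card + (v - (t.biUnion T).card)) * d := by ring
  have hEle : E ≤ t.card + (v - (t.biUnion T).card) := by
    rw [hE]
    refine Nat.ceil_le.2 ?_
    rw [div_le_iff₀ (by exact_mod_cast Nat.lt_of_lt_of_le Nat.zero_lt_one hd)]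
    exact_mod_cast hnat
  have h2 : (2 : ℤ) ^ E ∣ 2 ^ (t.card + (v - (t.biUnion T).card)) := pow_dvd_pow 2 hEle
  refine Dvd.dvd.trans h2 ?_
  have : (-2 : ℤ) ^ t.card * ((∏ j ∈ t, a j).val : ℤ) * 2 ^ (v - (t.biUnion T).card)
      = (2 : ℤ) ^ (t.card + (v - (t.biUnion T).card)) *
        ((-1 : ℤ) ^ t.card * ((∏ j ∈ t, a j).val : ℤ)) := by
    rw [pow_add, neg_pow]
    ring
  rw [this]
  exact Dvd.intro _ rfl

lemma sum_range_two_pow (n : ℕ) : ∑ j ∈ Finset.range n, 2 ^ j = 2 ^ n - 1 := by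
  induction n with
  | zero => simp
  | succ n ih =>
      rw [Finset.sum_range_succ, ih]
      have : 1 ≤ 2 ^ n := Nat.one_le_two_pow
      omega

lemma min_two_pow_sum (S : Finset ℕ) : 2 ^ S.card - 1 ≤ ∑ j ∈ S, 2 ^ j := by
  induction S using Finset.strongInduction with
  | _ S ih =>
    rcases Finset.eq_empty_or_nonempty S with rfl | hS
    · simp
    · set M := S.max' hS with hM
      have hMS : M ∈ S := S.max'_mem hS
      have hsub : S.erase M ⊂ S := Finset.erase_ssubset hMS
      have ihe := ih (S.erase M) hsub
      have hcard : (S.erase M).card = S.card - 1 := Finset.card_erase_of_mem hMS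
      have hcard1 : 1 ≤ S.card := Finset.Nonempty.card_pos hS
      have hMge : S.card - 1 ≤ M := by
        have : S ⊆ Finset.range (M + 1) := fun x hx =>
          Finset.mem_range.2 (Nat.lt_succ_of_le (S.le_max' x hx))
        have := Finset.card_le_card this
        rw [Finset.card_range] at this
        omega
      have hsum : ∑ j ∈ S, 2 ^ j = 2 ^ M + ∑ j ∈ S.erase M, 2 ^ j :=
        (Finset.add_sum_erase S _ hMS).symm
      have h2 : 2 ^ (S.card - 1) ≤ 2 ^ M := Nat.pow_le_pow_right (by norm_num) hMge
      have h3 : 2 ^ (S.card - 1) + 2 ^ (S.card - 1) = 2 ^ S.card := by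
        conv_rhs => rw [show S.card = (S.card - 1) + 1 by omega]
        rw [pow_succ]
        ring
      rw [hcard] at ihe
      omega

lemma eq_range_of_card_sum (n : ℕ) (hn : 1 ≤ n) (S : Finset ℕ) (hcard : S.card = n)
    (hsum : ∑ j ∈ S, 2 ^ j < 3 * 2 ^ (n - 1) - 1) : S = Finset.range n := by
  have hS : S.Nonempty := Finset.card_pos.1 (by omega)
  set M := S.max' hS with hM
  have hMS : M ∈ S := S.max'_mem hS
  have hcard' : (S.erase M).card = n - 1 := by rw [Finset.card_erase_of_mem hMS, hcard]
  have hMge : n - 1 ≤ M := by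
    have : S ⊆ Finset.range (M + 1) := fun x hx =>
      Finset.mem_range.2 (Nat.lt_succ_of_le (S.le_max' x hx))
    have := Finset.card_le_card this
    rw [Finset.card_range, hcard] at this
    omega
  have hMlt : M < n := by
    by_contra h
    push_neg at h
    have h1 : 2 ^ n ≤ 2 ^ M := Nat.pow_le_pow_right (by norm_num) h
    have h2 := min_two_pow_sum (S.erase M)
    rw [hcard'] at h2
    have hsum2 : ∑ j ∈ S, 2 ^ j = 2 ^ M + ∑ j ∈ S.erase M, 2 ^ j :=
      (Finset.add_sum_erase S _ hMS).symm
    have h4 : 2 ^ n = 2 * 2 ^ (n - 1) := by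
      rw [← pow_succ']
      congr 1
      omega
    have h5 : 1 ≤ 2 ^ (n - 1) := Nat.one_le_two_pow
    omega
  have hsub : S ⊆ Finset.range n := fun x hx =>
    Finset.mem_range.2 (lt_of_le_of_lt (S.le_max' x hx) hMlt)
  exact Finset.eq_of_subset_of_card_le hsub (by rw [Finset.card_range, hcard])

lemma card_le_of_sum_lt (n : ℕ) (hn : 1 ≤ n) (S : Finset ℕ)
    (hlt : ∑ j ∈ S, 2 ^ j < 3 * 2 ^ (n - 1) - 1)
    (hne : ∑ j ∈ S, 2 ^ j ≠ 2 ^ n - 1) : S.card ≤ n - 1 := by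
  by_contra h
  push_neg at h
  have hcn : n ≤ S.card := by omega
  obtain ⟨S', hsub, hcard⟩ := Finset.exists_subset_card_eq (s := S) (n := n) hcn
  have hle : ∑ j ∈ S', 2 ^ j ≤ ∑ j ∈ S, 2 ^ j :=
    Finset.sum_le_sum_of_subset hsub
  by_cases hc : S.card = n
  · have : S = Finset.range n := eq_range_of_card_sum n hn S hc hlt
    rw [this, sum_range_two_pow] at hne hlt
    exact hne rfl
  · -- card ≥ n+1
    obtain ⟨S'', hsub'', hcard''⟩ := Finset.exists_subset_card_eq (s := S) (n := n + 1) (by omega)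
    have h1 := min_two_pow_sum S''
    rw [hcard''] at h1
    have h2 : ∑ j ∈ S'', 2 ^ j ≤ ∑ j ∈ S, 2 ^ j := Finset.sum_le_sum_of_subset hsub''
    have h3 : 2 ^ (n + 1) = 4 * 2 ^ (n - 1) := by
      have : n + 1 = (n - 1) + 2 := by omega
      rw [this, pow_add]
      ring
    have h5 : 1 ≤ 2 ^ (n - 1) := Nat.one_le_two_pow
    omega

lemma rep_term (L : Type) [Field L] [Fintype L] [Algebra (ZMod 2) L]
    (v : ℕ) (b : Module.Basis (Fin v) (ZMod 2) L) (S : Finset ℕ) (e : ℕ) (hS : ∑ j ∈ S, 2 ^ j = e)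
    (cc : L) (x : L) :
    Algebra.trace (ZMod 2) L (cc * x ^ e)
      = ∑ p : (↥S → Fin v), (∏ j : ↥S, b.equivFun x (p j)) *
          Algebra.trace (ZMod 2) L (cc * ∏ j : ↥S, (b (p j)) ^ 2 ^ (j : ℕ)) := by
  haveI : CharP L 2 := charP_of_injective_algebraMap (algebraMap (ZMod 2) L).injective 2
  have hxj : ∀ j : ℕ, x ^ 2 ^ j
      = ∑ i : Fin v, (algebraMap (ZMod 2) L) (b.equivFun x i) * (b i) ^ 2 ^ j := by
    intro j
    conv_lhs => rw [← b.sum_equivFun x]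
    rw [sum_pow_char_pow]
    refine Finset.sum_congr rfl fun i _ => ?_
    rw [Algebra.smul_def, mul_pow, ← map_pow, zmod2_pow_eq _ (by positivity)]
  have hx : x ^ e = ∏ j : ↥S, (∑ i : Fin v, (algebraMap (ZMod 2) L) (b.equivFun x i)
      * (b i) ^ 2 ^ (j : ℕ)) := by
    rw [← hS, ← Finset.prod_pow_eq_pow_sum, ← Finset.prod_coe_sort]
    exact Finset.prod_congr rfl fun j _ => hxj _
  rw [hx, Finset.prod_univ_sum]
  rw [Finset.mul_sum, map_sum]
  rw [Fintype.piFinset_univ]  -- hope sums align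
  refine Finset.sum_congr rfl fun p _ => ?_
  rw [Finset.prod_mul_distrib, ← map_prod]
  rw [show cc * ((algebraMap (ZMod 2) L) (∏ j : ↥S, b.equivFun x (p j)) * ∏ j : ↥S, (b (p j)) ^ 2 ^ (j : ℕ))
      = (algebraMap (ZMod 2) L) (∏ j : ↥S, b.equivFun x (p j)) * (cc * ∏ j : ↥S, (b (p j)) ^ 2 ^ (j : ℕ)) from by ring]
  rw [← Algebra.smul_def, map_smul, smul_eq_mul]

/-- For `n` large enough: let `q = 2^a` (`a ≥ 1`), `K` a field with `q` elements,
`f(x) = ∑_{i=0}^g c_{2i+1} x^{2i+1} ∈ K[x]` with `c_{2g+1} ≠ 0` and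
`2^n − 1 < 2g + 1 < 3·2^{n−1} − 1`.  If `c_{2^n−1} = 0`, then for every `m ≥ 1` and
every degree-`m` extension `L/K`, the exponential sum
`S_m(f) = ∑_{x ∈ L} (−1)^{Tr_{L/F₂}(f(x))}` is divisible by `2^{⌈a·m/(n−1)⌉}`
(first slope at least `1/(n−1)`).  (The `F₂ = ZMod 2`-algebra structure on `L` is
unique since `L` has characteristic 2.) -/
theorem first_slope_case_i :
    ∃ N : ℕ, ∀ n : ℕ, N ≤ n → ∀ a : ℕ, 1 ≤ a →
      ∀ (K : Type) [Field K] [Fintype K], Fintype.card K = 2 ^ a →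
      ∀ g : ℕ, 2 ^ n - 1 < 2 * g + 1 → 2 * g + 1 < 3 * 2 ^ (n - 1) - 1 →
      ∀ c : ℕ → K, c (2 * g + 1) ≠ 0 → c (2 ^ n - 1) = 0 →
      ∀ m : ℕ, 1 ≤ m →
      ∀ (L : Type) [Field L] [Fintype L] [Algebra K L] [Algebra (ZMod 2) L],
        Module.finrank K L = m →
        (2 : ℤ) ^ (⌈(a * m : ℚ) / ((n : ℚ) - 1)⌉₊) ∣
          ∑ x : L, (-1 : ℤ) ^
            (Algebra.trace (ZMod 2) L
              (∑ i ∈ Finset.range (g + 1),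
                algebraMap K L (c (2 * i + 1)) * x ^ (2 * i + 1))).val := by
  classical
  refine ⟨2, ?_⟩
  intro n hn a ha K _ _ hK g hg1 hg2 c hc1 hc0 m hm L _ _ _ _ hrank
  -- setup
  set v := Module.finrank (ZMod 2) L with hv
  have hn1 : 1 ≤ n := by omega
  set d := n - 1 with hd
  have hd1 : 1 ≤ d := by omega
  -- v = a * m
  have hvam : v = a * m := by
    have h1 : Fintype.card L = Fintype.card K ^ Module.finrank K L := Module.card_eq_pow_finrank
    have h2 : Fintype.card L = Fintype.card (ZMod 2) ^ v := Module.card_eq_pow_finrank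
    rw [ZMod.card] at h2
    rw [hK, hrank, ← pow_mul] at h1
    have := h1.symm.trans h2
    exact (Nat.pow_right_injective (le_refl 2) this).symm
  -- exponent identity
  have hexp : (⌈(a * m : ℚ) / ((n : ℚ) - 1)⌉₊ : ℕ) = ⌈(v : ℚ) / (d : ℚ)⌉₊ := by
    congr 1
    rw [hvam]
    congr 1
    · push_cast; ring
    · rw [hd]; push_cast [Nat.cast_sub hn1]; ring
  rw [hexp]
  -- basis
  let b : Module.Basis (Fin v) (ZMod 2) L := Module.finBasis (ZMod 2) L
  -- bit supports
  set S : Fin (g + 1) → Finset ℕ := fun i =>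
    if c (2 * (i : ℕ) + 1) = 0 then ∅ else (2 * (i : ℕ) + 1).bitIndices.toFinset with hS
  have hSsum : ∀ i : Fin (g + 1), c (2 * (i : ℕ) + 1) ≠ 0 →
      ∑ j ∈ S i, 2 ^ j = 2 * (i : ℕ) + 1 := by
    intro i hi
    rw [hS]
    simp only [if_neg hi]
    exact Finset.twoPowSum_toFinset_bitIndices _
  have hScard : ∀ i : Fin (g + 1), (S i).card ≤ d := by
    intro i
    by_cases hi : c (2 * (i : ℕ) + 1) = 0
    · rw [hS]; simp [hi]
    · refine card_le_of_sum_lt n hn1 (S i) ?_ ?_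
      · rw [hSsum i hi, ← hd]
        have : (i : ℕ) < g + 1 := i.isLt
        omega
      · rw [hSsum i hi]
        intro hcontra
        exact hi (hcontra ▸ hc0)
  -- index type
  let ι : Type := (i : Fin (g + 1)) × ((S i) → Fin v)
  let T : ι → Finset (Fin v) := fun jj => (Finset.univ : Finset (S jj.1)).image jj.2
  have hT : ∀ jj : ι, (T jj).card ≤ d := by
    rintro ⟨i, p⟩
    calc ((Finset.univ : Finset (S i)).image p).card ≤ (Finset.univ : Finset (S i)).card :=
        Finset.card_image_le
      _ = (S i).card := by rw [Finset.card_univ, Fintype.card_coe]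
      _ ≤ d := hScard i
  let A : ι → ZMod 2 := fun jj =>
    Algebra.trace (ZMod 2) L (algebraMap K L (c (2 * (jj.1 : ℕ) + 1)) *
      ∏ j : (S jj.1), (b (jj.2 j)) ^ 2 ^ (j : ℕ))
  -- representation
  have hrep : ∀ x : L,
      Algebra.trace (ZMod 2) L (∑ i ∈ Finset.range (g + 1),
          algebraMap K L (c (2 * i + 1)) * x ^ (2 * i + 1))
        = ∑ jj : ι, A jj * ∏ i' ∈ T jj, b.equivFun x i' := by
    intro x
    rw [← Fin.sum_univ_eq_sum_range (fun i => algebraMap K L (c (2 * i + 1)) * x ^ (2 * i + 1))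
      (g + 1), map_sum]
    conv_rhs => rw [← Finset.univ_sigma_univ, Finset.sum_sigma]
    refine Finset.sum_congr rfl fun i _ => ?_
    by_cases hi : c (2 * (i : ℕ) + 1) = 0
    · rw [hi, map_zero, zero_mul, map_zero]
      symm
      refine Finset.sum_eq_zero fun p _ => ?_
      have : A ⟨i, p⟩ = 0 := by
        simp only [A, hi, map_zero, zero_mul, map_zero]
      rw [this, zero_mul]
    · rw [rep_term L v b (S i) (2 * (i : ℕ) + 1) (hSsum i hi) _ x]
      refine Finset.sum_congr rfl fun p _ => ?_
      rw [mul_comm]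
      congr 1
      simp only [T]
      rw [zmod2_prod_image (Finset.univ : Finset (S i)) p (b.equivFun x)]
  simp_rw [hrep]
  -- reindex by the linear equivalence
  have hre : ∑ x : L, (-1 : ℤ) ^ (∑ jj : ι, A jj * ∏ i' ∈ T jj, b.equivFun x i').val
      = ∑ y : Fin v → ZMod 2, (-1 : ℤ) ^ (∑ jj : ι, A jj * ∏ i' ∈ T jj, y i').val := by
    exact Fintype.sum_equiv b.equivFun.toEquiv _ _ (fun x => rfl)
  rw [hre]
  exact core_div v d hd1 T hT A
end
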